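/- Let p, q ≥ 1 be coprime integers with p + q ≥ 3 and let f = x^p·y^q ∈ ℂ[x,y]. Then C(f) = J_f/D_f is a free ℂ[t]-module of rank 1 generated by the class of x^{2p−1}·y^{2q−1}: for every h ∈ J_f there exists a unique polynomial P ∈ ℂ[t] such that h − P(f)·x^{2p−1}·y^{2q−1} ∈ D_f. -/

import Mathlib

open MvPolynomial

/-- Membership in `D_f = {f_x·∂g/∂y − f_y·∂g/∂x : g ∈ ℂ[x,y]}`. -/
def Dmem (f w : MvPolynomial (Fin 2) ℂ) : Prop :=
  ∃ g : MvPolynomial (Fin 2) ℂ,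
    w = pderiv 0 f * pderiv 1 g - pderiv 1 f * pderiv 0 g


noncomputable section Statement12Aux

/-- exponent vector (m,n) -/
def d2 (m n : ℕ) : Fin 2 →₀ ℕ := Finsupp.single 0 m + Finsupp.single 1 n

@[simp] lemma d2_apply0 (m n : ℕ) : d2 m n 0 = m := by simp [d2]
@[simp] lemma d2_apply1 (m n : ℕ) : d2 m n 1 = n := by simp [d2, Finsupp.single_apply]

lemma d2_eq_self (s : Fin 2 →₀ ℕ) : d2 (s 0) (s 1) = s := by
  ext i; fin_cases i <;> simp

lemma d2_inj {m n m' n' : ℕ} (h : d2 m n = d2 m' n') : m = m' ∧ n = n' := by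
  constructor
  · have := congrArg (fun s => s 0) h; simpa using this
  · have := congrArg (fun s => s 1) h; simpa using this

lemma d2_add (m n m' n' : ℕ) : d2 m n + d2 m' n' = d2 (m+m') (n+n') := by
  ext i; fin_cases i <;> simp

lemma d2_sub0 (m n : ℕ) : d2 m n - Finsupp.single 0 1 = d2 (m-1) n := by
  ext i; fin_cases i <;> simp [Finsupp.single_apply]

lemma d2_sub1 (m n : ℕ) : d2 m n - Finsupp.single 1 1 = d2 m (n-1) := by
  ext i; fin_cases i <;> simp [Finsupp.single_apply]

lemma d2_smul (k m n : ℕ) : k • d2 m n = d2 (k*m) (k*n) := by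
  ext i; fin_cases i <;> simp

lemma Xpow_mul (m n : ℕ) : (X 0 : MvPolynomial (Fin 2) ℂ)^m * X 1^n = monomial (d2 m n) 1 := by
  rw [X_pow_eq_monomial, X_pow_eq_monomial, monomial_mul, one_mul]; rfl

/-- The map `g ↦ f_x g_y - f_y g_x` as a linear map. -/
def Dlin (f : MvPolynomial (Fin 2) ℂ) : MvPolynomial (Fin 2) ℂ →ₗ[ℂ] MvPolynomial (Fin 2) ℂ :=
  (LinearMap.mulLeft ℂ (pderiv 0 f)).comp (pderiv (R := ℂ) 1).toLinearMap -
  (LinearMap.mulLeft ℂ (pderiv 1 f)).comp (pderiv (R := ℂ) 0).toLinearMap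

lemma Dlin_apply (f g : MvPolynomial (Fin 2) ℂ) :
    Dlin f g = pderiv 0 f * pderiv 1 g - pderiv 1 f * pderiv 0 g := rfl

lemma pderiv0_f (p q : ℕ) :
    pderiv 0 (monomial (d2 p q) (1:ℂ)) = monomial (d2 (p-1) q) (p:ℂ) := by
  rw [pderiv_monomial, d2_sub0]; simp

lemma pderiv1_f (p q : ℕ) :
    pderiv 1 (monomial (d2 p q) (1:ℂ)) = monomial (d2 p (q-1)) (q:ℂ) := by
  rw [pderiv_monomial, d2_sub1]; simp

lemma Dmon (p q : ℕ) (hp : 1 ≤ p) (hq : 1 ≤ q) (a b : ℕ) (c : ℂ) :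
    Dlin (monomial (d2 p q) (1:ℂ)) (monomial (d2 a b) c)
      = monomial (d2 (p-1+a) (q-1+b)) (c * ((p*b : ℕ) - (q*a : ℕ) : ℂ)) := by
  rw [Dlin_apply, pderiv0_f, pderiv1_f, pderiv_monomial, pderiv_monomial,
    d2_sub0, d2_sub1, monomial_mul, monomial_mul, d2_add, d2_add]
  simp only [d2_apply0, d2_apply1]
  rcases Nat.eq_zero_or_pos a with ha | ha <;> rcases Nat.eq_zero_or_pos b with hb | hb
  · subst ha; subst hb; simp
  · subst ha
    have e1 : q + (b-1) = q - 1 + b := by omega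
    rw [e1]
    simp only [Nat.cast_zero, mul_zero, Nat.mul_zero, map_zero, zero_mul, sub_zero]
    congr 1; push_cast; ring
  · subst hb
    have e1 : p + (a-1) = p - 1 + a := by omega
    rw [e1]
    simp only [Nat.cast_zero, mul_zero, map_zero, zero_sub, Nat.mul_zero]
    rw [← map_neg]
    congr 1; push_cast; ring
  · have e1 : q + (b-1) = q - 1 + b := by omega
    have e2 : p + (a-1) = p - 1 + a := by omega
    rw [e1, e2, ← map_sub]
    congr 1; push_cast; ring

lemma Dmon' (p q : ℕ) (hp : 1 ≤ p) (hq : 1 ≤ q) (s : Fin 2 →₀ ℕ) (c : ℂ) :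
    Dlin (monomial (d2 p q) (1:ℂ)) (monomial s c)
      = monomial (d2 (p-1+s 0) (q-1+s 1)) (c * ((p*(s 1) : ℕ) - (q*(s 0) : ℕ) : ℂ)) := by
  obtain ⟨a, b, rfl⟩ : ∃ a b, s = d2 a b := ⟨s 0, s 1, (d2_eq_self s).symm⟩
  simpa using Dmon p q hp hq a b c

/-- D-images have no resonant monomials. -/
lemma coeff_Dlin_zero (p q : ℕ) (hp : 1 ≤ p) (hq : 1 ≤ q) (k : ℕ)
    (g : MvPolynomial (Fin 2) ℂ) :
    coeff (d2 ((k+2)*p-1) ((k+2)*q-1)) (Dlin (monomial (d2 p q) (1:ℂ)) g) = 0 := by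
  conv_lhs => rw [g.as_sum]
  rw [map_sum, coeff_sum]
  refine Finset.sum_eq_zero fun d _ => ?_
  rw [Dmon' p q hp hq, coeff_monomial]
  split_ifs with hd
  · obtain ⟨h0, h1⟩ := d2_inj hd
    have ep : (k+2)*p = (k+1)*p + p := by ring
    have eq' : (k+2)*q = (k+1)*q + q := by ring
    have ha : d 0 = (k+1)*p := by omega
    have hb : d 1 = (k+1)*q := by omega
    rw [ha, hb]
    have : p * ((k+1)*q) = q * ((k+1)*p) := by ring
    rw [this, sub_self, mul_zero]
  · rfl

lemma coeff_aeval_mul (p q : ℕ) (hp : 1 ≤ p) (hq : 1 ≤ q) (k : ℕ) (P : Polynomial ℂ) :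
    coeff (d2 ((k+2)*p-1) ((k+2)*q-1))
      (Polynomial.aeval (monomial (d2 p q) (1:ℂ)) P * monomial (d2 (2*p-1) (2*q-1)) 1)
      = P.coeff k := by
  conv_lhs => rw [P.as_sum_support, map_sum, Finset.sum_mul, coeff_sum]
  have key : ∀ n : ℕ,
      Polynomial.aeval (monomial (d2 p q) (1:ℂ)) (Polynomial.monomial n (P.coeff n)) *
        monomial (d2 (2*p-1) (2*q-1)) 1
      = monomial (d2 ((n+2)*p-1) ((n+2)*q-1)) (P.coeff n) := by
    intro n
    rw [Polynomial.aeval_monomial, monomial_pow, d2_smul, one_pow, algebraMap_eq,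
      mul_assoc, monomial_mul, one_mul, d2_add, C_mul_monomial, mul_one]
    have ep : (n+2)*p = n*p + 2*p := by ring
    have eq' : (n+2)*q = n*q + 2*q := by ring
    have e0 : n*p + (2*p-1) = (n+2)*p - 1 := by omega
    have e1 : n*q + (2*q-1) = (n+2)*q - 1 := by omega
    rw [e0, e1]
  calc ∑ n ∈ P.support,
        coeff (d2 ((k+2)*p-1) ((k+2)*q-1))
          (Polynomial.aeval (monomial (d2 p q) (1:ℂ)) (Polynomial.monomial n (P.coeff n)) *
            monomial (d2 (2*p-1) (2*q-1)) 1)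
      = ∑ n ∈ P.support, if n = k then P.coeff n else 0 := by
        refine Finset.sum_congr rfl fun n _ => ?_
        rw [key n, coeff_monomial]
        congr 1
        simp only [eq_iff_iff]
        constructor
        · intro hd
          obtain ⟨h0, h1⟩ := d2_inj hd
          have ep : (n+2)*p = n*p + 2*p := by ring
          have ep2 : (k+2)*p = k*p + 2*p := by ring
          have : n*p = k*p := by omega
          exact Nat.eq_of_mul_eq_mul_right (by omega) this
        · rintro rfl; rfl
    _ = P.coeff k := by
        rw [Finset.sum_ite_eq' P.support k]
        split_ifs with hk
        · rfl
        · exact (Polynomial.notMem_support_iff.mp hk).symm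

/-- Support condition for elements of the Jacobian ideal. -/
lemma support_cond (p q : ℕ) (hp : 1 ≤ p) (hq : 1 ≤ q)
    (h : MvPolynomial (Fin 2) ℂ)
    (hmem : h ∈ Ideal.span ({pderiv 0 (monomial (d2 p q) (1:ℂ)),
      pderiv 1 (monomial (d2 p q) (1:ℂ))} : Set (MvPolynomial (Fin 2) ℂ))) :
    ∀ d ∈ h.support, p ≤ d 0 + 1 ∧ q ≤ d 1 + 1 ∧ p + q ≤ d 0 + d 1 + 1 := by
  classical
  refine Submodule.span_induction ?_ ?_ ?_ ?_ hmem
  · rintro x (rfl | rfl)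
    · rw [pderiv0_f]
      intro d hd
      have := support_monomial_subset hd
      simp only [Finset.mem_singleton] at this
      subst this
      simp only [d2_apply0, d2_apply1]
      omega
    · rw [pderiv1_f]
      intro d hd
      have := support_monomial_subset hd
      simp only [Finset.mem_singleton] at this
      subst this
      simp only [d2_apply0, d2_apply1]
      omega
  · intro d hd; simp at hd
  · intro x y _ _ hx hy d hd
    rcases Finset.mem_union.mp (support_add hd) with h' | h'
    · exact hx d h'
    · exact hy d h'
  · intro a x _ hx d hd
    rw [smul_eq_mul] at hd
    have := support_mul a x hd
    rw [Finset.mem_add] at this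
    obtain ⟨u, hu, v, hv, rfl⟩ := this
    have := hx v hv
    simp only [Finsupp.add_apply]
    omega

/-- Existence part. -/
lemma exists_rep (p q : ℕ) (hp : 1 ≤ p) (hq : 1 ≤ q) (hpq : Nat.Coprime p q)
    (h : MvPolynomial (Fin 2) ℂ)
    (hsupp : ∀ d ∈ h.support, p ≤ d 0 + 1 ∧ q ≤ d 1 + 1 ∧ p + q ≤ d 0 + d 1 + 1) :
    ∃ P : Polynomial ℂ, ∃ g : MvPolynomial (Fin 2) ℂ,
      h - Polynomial.aeval (monomial (d2 p q) (1:ℂ)) P * monomial (d2 (2*p-1) (2*q-1)) 1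
        = Dlin (monomial (d2 p q) (1:ℂ)) g := by
  classical
  set F : MvPolynomial (Fin 2) ℂ := monomial (d2 p q) 1 with hF
  set G : MvPolynomial (Fin 2) ℂ := monomial (d2 (2*p-1) (2*q-1)) 1 with hG
  set pr : (Fin 2 →₀ ℕ) → Prop := fun d => p * (d 1 + 1 - q) = q * (d 0 + 1 - p) with hpr
  refine ⟨∑ d ∈ h.support.filter pr,
      Polynomial.C (coeff d h) * Polynomial.X ^ ((d 0 + 1 - p)/p - 1),
    ∑ d ∈ h.support.filter (fun d => ¬ pr d),
      monomial (d2 (d 0 + 1 - p) (d 1 + 1 - q))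
        (coeff d h / (((p*(d 1 + 1 - q) : ℕ) : ℂ) - ((q*(d 0 + 1 - p) : ℕ) : ℂ))), ?_⟩
  have claimA : Dlin F (∑ d ∈ h.support.filter (fun d => ¬ pr d),
      monomial (d2 (d 0 + 1 - p) (d 1 + 1 - q))
        (coeff d h / (((p*(d 1 + 1 - q) : ℕ) : ℂ) - ((q*(d 0 + 1 - p) : ℕ) : ℂ))))
      = ∑ d ∈ h.support.filter (fun d => ¬ pr d), monomial d (coeff d h) := by
    rw [map_sum]
    refine Finset.sum_congr rfl fun d hd => ?_
    rw [Finset.mem_filter] at hd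
    obtain ⟨hds, hdpr⟩ := hd
    obtain ⟨h1, h2, h3⟩ := hsupp d hds
    rw [hF, Dmon p q hp hq]
    have hz : (((p*(d 1 + 1 - q) : ℕ) : ℂ) - ((q*(d 0 + 1 - p) : ℕ) : ℂ)) ≠ 0 := by
      rw [sub_ne_zero]
      exact fun hc => hdpr (Nat.cast_injective hc)
    rw [div_mul_cancel₀ _ hz]
    congr 1
    have e0 : p - 1 + (d 0 + 1 - p) = d 0 := by omega
    have e1 : q - 1 + (d 1 + 1 - q) = d 1 := by omega
    rw [e0, e1, d2_eq_self]
  have claimB : Polynomial.aeval F (∑ d ∈ h.support.filter pr,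
      Polynomial.C (coeff d h) * Polynomial.X ^ ((d 0 + 1 - p)/p - 1)) * G
      = ∑ d ∈ h.support.filter pr, monomial d (coeff d h) := by
    rw [map_sum, Finset.sum_mul]
    refine Finset.sum_congr rfl fun d hd => ?_
    rw [Finset.mem_filter] at hd
    obtain ⟨hds, hdpr⟩ := hd
    obtain ⟨h1, h2, h3⟩ := hsupp d hds
    -- From resonance and coprimality get d0+1-p = j*p, d1+1-q = j*q, j ≥ 1
    have hdvd : p ∣ (d 0 + 1 - p) := by
      refine Nat.Coprime.dvd_of_dvd_mul_left hpq ?_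
      exact ⟨(d 1 + 1 - q), by rw [hpr] at hdpr; omega⟩
    obtain ⟨j, hj⟩ := hdvd
    have hb : d 1 + 1 - q = q * j := by
      have : p * (d 1 + 1 - q) = p * (q * j) := by
        rw [hpr] at hdpr
        calc p * (d 1 + 1 - q) = q * (d 0 + 1 - p) := hdpr
          _ = q * (p * j) := by rw [hj]
          _ = p * (q * j) := by ring
      exact Nat.eq_of_mul_eq_mul_left (by omega) this
    have hj1 : 1 ≤ j := by
      by_contra hc
      have : j = 0 := by omega
      subst this
      simp only [Nat.mul_zero] at hj hb
      omega
    obtain ⟨j', rfl⟩ : ∃ j', j = j'+1 := ⟨j-1, by omega⟩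
    have hdiv : (d 0 + 1 - p)/p - 1 = j' := by
      rw [hj, Nat.mul_div_cancel_left _ (by omega : 0 < p)]
      omega
    rw [map_mul, Polynomial.aeval_C, map_pow, Polynomial.aeval_X, hdiv, hF,
      monomial_pow, d2_smul, one_pow, algebraMap_eq, hG, mul_assoc, monomial_mul,
      one_mul, d2_add, C_mul_monomial, mul_one]
    congr 1
    have cp : p * (j'+1) = j' * p + p := by ring
    have cq : q * (j'+1) = j' * q + q := by ring
    have e0 : j' * p + (2*p-1) = d 0 := by omega
    have e1 : j' * q + (2*q-1) = d 1 := by omega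
    rw [e0, e1, d2_eq_self]
  rw [claimA, claimB, sub_eq_iff_eq_add, add_comm, Finset.sum_filter_add_sum_filter_not]
  exact h.as_sum

end Statement12Aux

/-- For `f = x^p y^q` with `p, q ≥ 1` coprime and `p + q ≥ 3`, the module
`C(f) = J_f/D_f` is free of rank 1 over `ℂ[t]`, generated by the class of
`x^{2p−1} y^{2q−1}`: every `h ∈ J_f` is congruent modulo `D_f` to `P(f)·x^{2p−1}y^{2q−1}`
for a unique polynomial `P ∈ ℂ[t]`. -/
theorem statement12 (p q : ℕ) (hp : 1 ≤ p) (hq : 1 ≤ q) (hpq : Nat.Coprime p q)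
    (hpq3 : 3 ≤ p + q) :
    ∀ h ∈ Ideal.span ({pderiv 0 (X 0 ^ p * X 1 ^ q), pderiv 1 (X 0 ^ p * X 1 ^ q)} :
        Set (MvPolynomial (Fin 2) ℂ)),
      ∃! P : Polynomial ℂ,
        Dmem (X 0 ^ p * X 1 ^ q)
          (h - Polynomial.aeval (X 0 ^ p * X 1 ^ q : MvPolynomial (Fin 2) ℂ) P *
            (X 0 ^ (2 * p - 1) * X 1 ^ (2 * q - 1))) := by
  intro h hmem
  rw [Xpow_mul p q] at hmem
  have hsupp := support_cond p q hp hq h hmem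
  obtain ⟨P, g, hPg⟩ := exists_rep p q hp hq hpq h hsupp
  refine ⟨P, ⟨g, ?_⟩, ?_⟩
  · rw [Xpow_mul p q, Xpow_mul (2*p-1) (2*q-1), hPg, Dlin_apply]
  · rintro P' ⟨g', hg'⟩
    rw [Xpow_mul p q, Xpow_mul (2*p-1) (2*q-1)] at hg'
    have hg'' : h - Polynomial.aeval (monomial (d2 p q) (1:ℂ)) P' *
        monomial (d2 (2*p-1) (2*q-1)) 1 = Dlin (monomial (d2 p q) 1) g' := by
      rw [Dlin_apply]; exact hg'
    have key : ∀ k : ℕ, (P' - P).coeff k = 0 := by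
      intro k
      have hc := coeff_aeval_mul p q hp hq k (P' - P)
      rw [map_sub, sub_mul] at hc
      have e : Polynomial.aeval (monomial (d2 p q) (1:ℂ)) P' *
            monomial (d2 (2*p-1) (2*q-1)) 1 -
          Polynomial.aeval (monomial (d2 p q) (1:ℂ)) P * monomial (d2 (2*p-1) (2*q-1)) 1
          = Dlin (monomial (d2 p q) 1) (g - g') := by
        rw [map_sub, ← hPg, ← hg'']; ring
      rw [e, coeff_Dlin_zero p q hp hq] at hc
      exact hc.symm
    have hz : P' - P = 0 := Polynomial.ext fun k => by rw [key k]; simp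
    exact sub_eq_zero.mp hz
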